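/- Let k be a field, V and M finite-dimensional k-vector spaces with V ≠ 0, and F : V ⊗ M → V ⊗ V a k-linear isomorphism. Then the following are equivalent: (i) for every x ∈ End(V), F_{12} ∘ F_{13} ∘ (x ⊗ id_M ⊗ id_M) ∘ F_{13}⁻¹ ∘ F_{12}⁻¹ = F_{23} ∘ F_{12} ∘ (x ⊗ id_M ⊗ id_M) ∘ F_{12}⁻¹ ∘ F_{23}⁻¹ as endomorphisms of V ⊗ V ⊗ V (i.e. the comultiplication Δ_F(x) = F ∘ (x ⊗ id_M) ∘ F⁻¹ is coassociative); (ii) there exists a k-linear automorphism Φ of M ⊗ M such that (F, Φ) satisfies the modified pentagon equation. -/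

import Mathlib

open TensorProduct

noncomputable section

variable {k : Type*} [Field k]

/-- Apply `G` to tensor factors 1 and 2 of a triple tensor product. -/
def m12 {A B C P Q : Type*}
    [AddCommGroup A] [AddCommGroup B] [AddCommGroup C] [AddCommGroup P] [AddCommGroup Q]
    [Module k A] [Module k B] [Module k C] [Module k P] [Module k Q]
    (G : A ⊗[k] B →ₗ[k] P ⊗[k] Q) :
    A ⊗[k] (B ⊗[k] C) →ₗ[k] P ⊗[k] (Q ⊗[k] C) :=
  (TensorProduct.assoc k P Q C).toLinearMap ∘ₗ G.rTensor C ∘ₗ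
    (TensorProduct.assoc k A B C).symm.toLinearMap

/-- Apply `G` to tensor factors 2 and 3 of a triple tensor product. -/
def m23 {A B C Q R : Type*}
    [AddCommGroup A] [AddCommGroup B] [AddCommGroup C] [AddCommGroup Q] [AddCommGroup R]
    [Module k A] [Module k B] [Module k C] [Module k Q] [Module k R]
    (G : B ⊗[k] C →ₗ[k] Q ⊗[k] R) :
    A ⊗[k] (B ⊗[k] C) →ₗ[k] A ⊗[k] (Q ⊗[k] R) :=
  G.lTensor A

/-- Apply `G` to tensor factors 1 and 3 of a triple tensor product. -/
def m13 {A B C P R : Type*}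
    [AddCommGroup A] [AddCommGroup B] [AddCommGroup C] [AddCommGroup P] [AddCommGroup R]
    [Module k A] [Module k B] [Module k C] [Module k P] [Module k R]
    (G : A ⊗[k] C →ₗ[k] P ⊗[k] R) :
    A ⊗[k] (B ⊗[k] C) →ₗ[k] P ⊗[k] (B ⊗[k] R) :=
  ((TensorProduct.comm k R B).toLinearMap.lTensor P) ∘ₗ
    (TensorProduct.assoc k P R B).toLinearMap ∘ₗ G.rTensor B ∘ₗ
    (TensorProduct.assoc k A C B).symm.toLinearMap ∘ₗ
    ((TensorProduct.comm k B C).toLinearMap.lTensor A)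

/-- The modified pentagon equation for a pair `(F, Φ)`. -/
def MPE {V M : Type*} [AddCommGroup V] [AddCommGroup M] [Module k V] [Module k M]
    (F : V ⊗[k] M →ₗ[k] V ⊗[k] V) (Φ : M ⊗[k] M →ₗ[k] M ⊗[k] M) : Prop :=
  m12 F ∘ₗ m13 F ∘ₗ m23 Φ = m23 F ∘ₗ m12 F

section helpers

variable {X Y Z : Type*} [AddCommGroup X] [AddCommGroup Y] [AddCommGroup Z]
  [Module k X] [Module k Y] [Module k Z]

lemma aux_mid_id (q : X →ₗ[k] Y) (p : Y →ₗ[k] X) (h : p ∘ₗ q = LinearMap.id)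
    (r : Z →ₗ[k] X) : p ∘ₗ (q ∘ₗ r) = r := by
  rw [← LinearMap.comp_assoc, h, LinearMap.id_comp]

lemma aux_esymm_e (e : X ≃ₗ[k] Y) : e.symm.toLinearMap ∘ₗ e.toLinearMap = LinearMap.id := by
  ext z; simp

lemma aux_e_esymm (e : X ≃ₗ[k] Y) : e.toLinearMap ∘ₗ e.symm.toLinearMap = LinearMap.id := by
  ext z; simp

lemma aux_comm_comm :
    (TensorProduct.comm k X Y).toLinearMap ∘ₗ (TensorProduct.comm k Y X).toLinearMap
      = LinearMap.id :=
  TensorProduct.ext' fun a b => by simp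

lemma aux_lTensor_comm_comm (A : Type*) [AddCommGroup A] [Module k A] :
    ((TensorProduct.comm k X Y).toLinearMap.lTensor A) ∘ₗ
      ((TensorProduct.comm k Y X).toLinearMap.lTensor A) = LinearMap.id := by
  rw [← LinearMap.lTensor_comp, aux_comm_comm, LinearMap.lTensor_id]

end helpers

section mcomp

variable {A B C P Q R A' B' C' : Type*}
  [AddCommGroup A] [AddCommGroup B] [AddCommGroup C] [AddCommGroup P] [AddCommGroup Q]
  [AddCommGroup R] [AddCommGroup A'] [AddCommGroup B'] [AddCommGroup C']
  [Module k A] [Module k B] [Module k C] [Module k P] [Module k Q] [Module k R]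
  [Module k A'] [Module k B'] [Module k C']

lemma m12_comp (G : A ⊗[k] B →ₗ[k] P ⊗[k] Q) (G' : A' ⊗[k] B' →ₗ[k] A ⊗[k] B) :
    m12 (C := C) G ∘ₗ m12 G' = m12 (G ∘ₗ G') := by
  unfold m12
  simp only [LinearMap.rTensor_comp, LinearMap.comp_assoc]
  rw [aux_mid_id _ _ (aux_esymm_e _)]

lemma m12_id : m12 (C := C) (LinearMap.id : A ⊗[k] B →ₗ[k] A ⊗[k] B) = LinearMap.id := by
  unfold m12
  rw [LinearMap.rTensor_id, LinearMap.id_comp, aux_e_esymm]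

lemma m13_comp (G : A ⊗[k] C →ₗ[k] P ⊗[k] R) (G' : A' ⊗[k] C' →ₗ[k] A ⊗[k] C) :
    m13 (B := B) G ∘ₗ m13 G' = m13 (G ∘ₗ G') := by
  unfold m13
  simp only [LinearMap.rTensor_comp, LinearMap.comp_assoc]
  rw [aux_mid_id _ _ (aux_lTensor_comm_comm A), aux_mid_id _ _ (aux_esymm_e _)]

lemma m13_id : m13 (B := B) (LinearMap.id : A ⊗[k] C →ₗ[k] A ⊗[k] C) = LinearMap.id := by
  unfold m13
  rw [LinearMap.rTensor_id, LinearMap.id_comp]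
  rw [aux_mid_id _ _ (aux_e_esymm _), aux_lTensor_comm_comm]

lemma m23_comp (G : B ⊗[k] C →ₗ[k] Q ⊗[k] R) (G' : B' ⊗[k] C' →ₗ[k] B ⊗[k] C) :
    m23 (A := A) G ∘ₗ m23 G' = m23 (G ∘ₗ G') :=
  (LinearMap.lTensor_comp _ _ _).symm

lemma m23_id : m23 (A := A) (LinearMap.id : B ⊗[k] C →ₗ[k] B ⊗[k] C) = LinearMap.id :=
  LinearMap.lTensor_id _ _

-- cancellation, pointwise
lemma m12_cancel₁ (e : A ⊗[k] B ≃ₗ[k] P ⊗[k] Q) (z : A ⊗[k] (B ⊗[k] C)) :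
    m12 e.symm.toLinearMap (m12 e.toLinearMap z) = z := by
  have h : m12 (C := C) e.symm.toLinearMap ∘ₗ m12 e.toLinearMap = LinearMap.id := by
    rw [m12_comp, aux_esymm_e, m12_id]
  exact LinearMap.congr_fun h z

lemma m12_cancel₂ (e : A ⊗[k] B ≃ₗ[k] P ⊗[k] Q) (z : P ⊗[k] (Q ⊗[k] C)) :
    m12 e.toLinearMap (m12 e.symm.toLinearMap z) = z := by
  have h : m12 (C := C) e.toLinearMap ∘ₗ m12 e.symm.toLinearMap = LinearMap.id := by
    rw [m12_comp, aux_e_esymm, m12_id]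
  exact LinearMap.congr_fun h z

lemma m13_cancel₁ (e : A ⊗[k] C ≃ₗ[k] P ⊗[k] R) (z : A ⊗[k] (B ⊗[k] C)) :
    m13 e.symm.toLinearMap (m13 e.toLinearMap z) = z := by
  have h : m13 (B := B) e.symm.toLinearMap ∘ₗ m13 e.toLinearMap = LinearMap.id := by
    rw [m13_comp, aux_esymm_e, m13_id]
  exact LinearMap.congr_fun h z

lemma m13_cancel₂ (e : A ⊗[k] C ≃ₗ[k] P ⊗[k] R) (z : P ⊗[k] (B ⊗[k] R)) :
    m13 e.toLinearMap (m13 e.symm.toLinearMap z) = z := by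
  have h : m13 (B := B) e.toLinearMap ∘ₗ m13 e.symm.toLinearMap = LinearMap.id := by
    rw [m13_comp, aux_e_esymm, m13_id]
  exact LinearMap.congr_fun h z

lemma m23_cancel₁ (e : B ⊗[k] C ≃ₗ[k] Q ⊗[k] R) (z : A ⊗[k] (B ⊗[k] C)) :
    m23 e.symm.toLinearMap (m23 e.toLinearMap z) = z := by
  have h : m23 (A := A) e.symm.toLinearMap ∘ₗ m23 e.toLinearMap = LinearMap.id := by
    rw [m23_comp, aux_esymm_e, m23_id]
  exact LinearMap.congr_fun h z

lemma m23_cancel₂ (e : B ⊗[k] C ≃ₗ[k] Q ⊗[k] R) (z : A ⊗[k] (Q ⊗[k] R)) :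
    m23 e.toLinearMap (m23 e.symm.toLinearMap z) = z := by
  have h : m23 (A := A) e.toLinearMap ∘ₗ m23 e.symm.toLinearMap = LinearMap.id := by
    rw [m23_comp, aux_e_esymm, m23_id]
  exact LinearMap.congr_fun h z

end mcomp

section central

variable {V W : Type*} [AddCommGroup V] [Module k V] [AddCommGroup W] [Module k W]

lemma aux_exists_dual [Nontrivial V] : ∃ (v0 : V) (φ : V →ₗ[k] k), φ v0 = 1 := by
  obtain ⟨i⟩ := (Module.Basis.ofVectorSpace k V).index_nonempty
  refine ⟨Module.Basis.ofVectorSpace k V i, (Module.Basis.ofVectorSpace k V).coord i, ?_⟩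
  rw [Module.Basis.coord_apply, Module.Basis.repr_self, Finsupp.single_eq_same]

lemma aux_eq_lTensor [Nontrivial V] (S : V ⊗[k] W →ₗ[k] V ⊗[k] W)
    (hc : ∀ x : Module.End k V, S ∘ₗ x.rTensor W = x.rTensor W ∘ₗ S) :
    ∃ ψ : W →ₗ[k] W, S = ψ.lTensor V := by
  obtain ⟨v0, φ, hφ⟩ := aux_exists_dual (k := k) (V := V)
  set π : V ⊗[k] W →ₗ[k] W :=
    (TensorProduct.lid k W).toLinearMap ∘ₗ φ.rTensor W with hπ
  refine ⟨π ∘ₗ S ∘ₗ TensorProduct.mk k V W v0, ?_⟩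
  apply TensorProduct.ext'
  intro v w
  have h1 : ((φ.smulRight v).rTensor W) (v0 ⊗ₜ[k] w) = v ⊗ₜ[k] w := by
    simp [hφ]
  have h2 := LinearMap.congr_fun (hc (φ.smulRight v)) (v0 ⊗ₜ[k] w)
  simp only [LinearMap.comp_apply] at h2
  have h3 : (φ.smulRight v).rTensor W = TensorProduct.mk k V W v ∘ₗ π := by
    apply TensorProduct.ext'
    intro u w'
    simp only [LinearMap.rTensor_tmul, LinearMap.smulRight_apply, hπ, LinearMap.comp_apply,
      LinearEquiv.coe_coe, TensorProduct.lid_tmul, TensorProduct.mk_apply]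
    rw [TensorProduct.smul_tmul]
  calc S (v ⊗ₜ[k] w) = S ((φ.smulRight v).rTensor W (v0 ⊗ₜ[k] w)) := by rw [h1]
    _ = (φ.smulRight v).rTensor W (S (v0 ⊗ₜ[k] w)) := h2
    _ = v ⊗ₜ[k] (π (S (v0 ⊗ₜ[k] w))) := by rw [h3]; rfl
    _ = ((π ∘ₗ S ∘ₗ TensorProduct.mk k V W v0).lTensor V) (v ⊗ₜ[k] w) := by
        simp [LinearMap.lTensor_tmul]

lemma aux_lTensor_inj [Nontrivial V] {ψ ψ' : W →ₗ[k] W}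
    (h : ψ.lTensor V = ψ'.lTensor V) : ψ = ψ' := by
  obtain ⟨v0, φ, hφ⟩ := aux_exists_dual (k := k) (V := V)
  ext w
  have h2 := LinearMap.congr_fun h (v0 ⊗ₜ[k] w)
  simp only [LinearMap.lTensor_tmul] at h2
  have h3 := congrArg ((TensorProduct.lid k W).toLinearMap ∘ₗ φ.rTensor W) h2
  simpa [hφ] using h3

lemma aux_centralizer [Nontrivial V] (T T' : V ⊗[k] W →ₗ[k] V ⊗[k] W)
    (h1 : T ∘ₗ T' = LinearMap.id) (h2 : T' ∘ₗ T = LinearMap.id)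
    (hc : ∀ x : Module.End k V, T ∘ₗ x.rTensor W = x.rTensor W ∘ₗ T) :
    ∃ Ψ : W ≃ₗ[k] W, T' = Ψ.toLinearMap.lTensor V := by
  have hTT' : ∀ z, T (T' z) = z := fun z => LinearMap.congr_fun h1 z
  have hT'T : ∀ z, T' (T z) = z := fun z => LinearMap.congr_fun h2 z
  have hc' : ∀ x : Module.End k V, T' ∘ₗ x.rTensor W = x.rTensor W ∘ₗ T' := by
    intro x
    apply LinearMap.ext
    intro z
    have e1 := LinearMap.congr_fun (hc x) (T' z)
    simp only [LinearMap.comp_apply] at e1 ⊢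
    calc T' (x.rTensor W z) = T' (x.rTensor W (T (T' z))) := by rw [hTT']
      _ = T' (T (x.rTensor W (T' z))) := by rw [e1]
      _ = x.rTensor W (T' z) := hT'T _
  obtain ⟨ψ, hψ⟩ := aux_eq_lTensor T hc
  obtain ⟨ψ', hψ'⟩ := aux_eq_lTensor T' hc'
  have hcomp1 : ψ' ∘ₗ ψ = LinearMap.id := by
    apply aux_lTensor_inj (V := V)
    rw [LinearMap.lTensor_comp, LinearMap.lTensor_id, ← hψ, ← hψ', h2]
  have hcomp2 : ψ ∘ₗ ψ' = LinearMap.id := by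
    apply aux_lTensor_inj (V := V)
    rw [LinearMap.lTensor_comp, LinearMap.lTensor_id, ← hψ, ← hψ', h1]
  exact ⟨LinearEquiv.ofLinear ψ' ψ hcomp1 hcomp2, hψ'⟩

end central
/-- For a linear isomorphism `F : V ⊗ M → V ⊗ V`, the comultiplication
`Δ_F(x) = F ∘ (x ⊗ id_M) ∘ F⁻¹` is coassociative iff there is an automorphism `Φ` of `M ⊗ M`
such that `(F, Φ)` satisfies the modified pentagon equation. -/
theorem stmt2 {V M : Type}
    [AddCommGroup V] [Module k V] [FiniteDimensional k V] [Nontrivial V]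
    [AddCommGroup M] [Module k M] [FiniteDimensional k M]
    (F : V ⊗[k] M ≃ₗ[k] V ⊗[k] V) :
    (∀ x : Module.End k V,
        m12 F.toLinearMap ∘ₗ m13 F.toLinearMap ∘ₗ x.rTensor (M ⊗[k] M) ∘ₗ
            m13 F.symm.toLinearMap ∘ₗ m12 F.symm.toLinearMap =
          m23 F.toLinearMap ∘ₗ m12 F.toLinearMap ∘ₗ x.rTensor (M ⊗[k] M) ∘ₗ
            m12 F.symm.toLinearMap ∘ₗ m23 F.symm.toLinearMap) ↔
      ∃ Φ : M ⊗[k] M ≃ₗ[k] M ⊗[k] M, MPE F.toLinearMap Φ.toLinearMap := by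
  constructor
  · intro h
    have hP : ∀ (x : Module.End k V) (z : V ⊗[k] (V ⊗[k] V)),
        m12 F.toLinearMap (m13 F.toLinearMap (x.rTensor (M ⊗[k] M)
          (m13 F.symm.toLinearMap (m12 F.symm.toLinearMap z)))) =
        m23 F.toLinearMap (m12 F.toLinearMap (x.rTensor (M ⊗[k] M)
          (m12 F.symm.toLinearMap (m23 F.symm.toLinearMap z)))) := by
      intro x z
      have := LinearMap.congr_fun (h x) z
      simpa only [LinearMap.comp_apply] using this
    have h1 : ((m12 F.symm.toLinearMap ∘ₗ m23 F.symm.toLinearMap) ∘ₗ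
          (m12 F.toLinearMap ∘ₗ m13 F.toLinearMap)) ∘ₗ
        ((m13 F.symm.toLinearMap ∘ₗ m12 F.symm.toLinearMap) ∘ₗ
          (m23 F.toLinearMap ∘ₗ m12 F.toLinearMap)) = LinearMap.id := by
      apply LinearMap.ext; intro z
      simp only [LinearMap.comp_apply, LinearMap.id_apply]
      rw [m13_cancel₂ F, m12_cancel₂ F, m23_cancel₁ F, m12_cancel₁ F]
    have h2 : ((m13 F.symm.toLinearMap ∘ₗ m12 F.symm.toLinearMap) ∘ₗ
          (m23 F.toLinearMap ∘ₗ m12 F.toLinearMap)) ∘ₗ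
        ((m12 F.symm.toLinearMap ∘ₗ m23 F.symm.toLinearMap) ∘ₗ
          (m12 F.toLinearMap ∘ₗ m13 F.toLinearMap)) = LinearMap.id := by
      apply LinearMap.ext; intro z
      simp only [LinearMap.comp_apply, LinearMap.id_apply]
      rw [m12_cancel₂ F, m23_cancel₂ F, m12_cancel₁ F, m13_cancel₁ F]
    have hc : ∀ x : Module.End k V,
        ((m12 F.symm.toLinearMap ∘ₗ m23 F.symm.toLinearMap) ∘ₗ
            (m12 F.toLinearMap ∘ₗ m13 F.toLinearMap)) ∘ₗ x.rTensor (M ⊗[k] M) =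
          x.rTensor (M ⊗[k] M) ∘ₗ ((m12 F.symm.toLinearMap ∘ₗ m23 F.symm.toLinearMap) ∘ₗ
            (m12 F.toLinearMap ∘ₗ m13 F.toLinearMap)) := by
      intro x
      apply LinearMap.ext; intro z
      simp only [LinearMap.comp_apply]
      have key := hP x (m12 F.toLinearMap (m13 F.toLinearMap z))
      rw [m12_cancel₁ F, m13_cancel₁ F] at key
      rw [key, m23_cancel₁ F, m12_cancel₁ F]
    obtain ⟨Ψ, hΨ⟩ := aux_centralizer
      ((m12 F.symm.toLinearMap ∘ₗ m23 F.symm.toLinearMap) ∘ₗ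
        (m12 F.toLinearMap ∘ₗ m13 F.toLinearMap))
      ((m13 F.symm.toLinearMap ∘ₗ m12 F.symm.toLinearMap) ∘ₗ
        (m23 F.toLinearMap ∘ₗ m12 F.toLinearMap)) h1 h2 hc
    refine ⟨Ψ, ?_⟩
    unfold MPE
    have hm : m23 (A := V) Ψ.toLinearMap =
        (m13 F.symm.toLinearMap ∘ₗ m12 F.symm.toLinearMap) ∘ₗ
          (m23 F.toLinearMap ∘ₗ m12 F.toLinearMap) := hΨ.symm
    apply LinearMap.ext; intro z
    simp only [LinearMap.comp_apply]
    rw [hm]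
    simp only [LinearMap.comp_apply]
    rw [m13_cancel₂ F, m12_cancel₂ F]
  · rintro ⟨Φ, hΦ⟩ x
    apply LinearMap.ext; intro z
    simp only [LinearMap.comp_apply]
    have hP : ∀ y : V ⊗[k] (M ⊗[k] M),
        m12 F.toLinearMap (m13 F.toLinearMap (m23 (A := V) Φ.toLinearMap y)) =
          m23 F.toLinearMap (m12 F.toLinearMap y) := by
      intro y
      have := LinearMap.congr_fun hΦ y
      simpa only [LinearMap.comp_apply] using this
    have hinv : ∀ w : V ⊗[k] (V ⊗[k] V),
        m23 (A := V) Φ.toLinearMap (m12 F.symm.toLinearMap (m23 F.symm.toLinearMap w)) =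
          m13 F.symm.toLinearMap (m12 F.symm.toLinearMap w) := by
      intro w
      have e1 : m12 F.toLinearMap (m13 F.toLinearMap (m23 (A := V) Φ.toLinearMap
          (m12 F.symm.toLinearMap (m23 F.symm.toLinearMap w)))) = w := by
        rw [hP, m12_cancel₂ F, m23_cancel₂ F]
      have e2 : m12 F.toLinearMap (m13 F.toLinearMap
          (m13 F.symm.toLinearMap (m12 F.symm.toLinearMap w))) = w := by
        rw [m13_cancel₂ F, m12_cancel₂ F]
      have e3 := congrArg
        (fun u => m13 F.symm.toLinearMap (m12 F.symm.toLinearMap u)) (e1.trans e2.symm)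
      simpa only [m12_cancel₁ F, m13_cancel₁ F] using e3
    have hcomm : ∀ w : V ⊗[k] (M ⊗[k] M),
        m23 (A := V) Φ.toLinearMap (x.rTensor (M ⊗[k] M) w) =
          x.rTensor (M ⊗[k] M) (m23 (A := V) Φ.toLinearMap w) := by
      intro w
      have h1 := LinearMap.congr_fun
        (LinearMap.lTensor_comp_rTensor (f := x) (g := Φ.toLinearMap)) w
      have h2 := LinearMap.congr_fun
        (LinearMap.rTensor_comp_lTensor (f := x) (g := Φ.toLinearMap)) w
      simp only [LinearMap.comp_apply] at h1 h2
      exact h1.trans h2.symm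
    rw [← hP, hcomm, hinv]

end
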